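/- Let W ∈ ℝ^{N×N} be a symmetric matrix with nonnegative entries and positive degrees, let W_c be its coarse graph with respect to a partition into n nonempty parts with normalized Laplacian L_c, let C ∈ ℝ^{n×N} be the normalized coarsening matrix, and let L_l be the normalized Laplacian of the lifted graph W_l. If u_c ∈ ℝⁿ satisfies L_c u_c = λ u_c, then the lifted vector Cᵀ u_c satisfies L_l (Cᵀ u_c) = λ (Cᵀ u_c); that is, eigenvectors of the coarse normalized Laplacian lift to eigenvectors of the lifted normalized Laplacian with the same eigenvalue. -/

import Mathlib

open Matrix BigOperators

noncomputable section

/-- Degree of node `i`: the `i`-th row sum of the weight matrix. -/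
def deg {N : ℕ} (W : Matrix (Fin N) (Fin N) ℝ) (i : Fin N) : ℝ := ∑ j, W i j

/-- `D^{-1/2}`: the diagonal matrix of inverse square roots of degrees. -/
def invSqrtDeg {N : ℕ} (W : Matrix (Fin N) (Fin N) ℝ) : Matrix (Fin N) (Fin N) ℝ :=
  Matrix.diagonal fun i => (Real.sqrt (deg W i))⁻¹

/-- Normalized Laplacian `L = I - D^{-1/2} W D^{-1/2}`. -/
def normLap {N : ℕ} (W : Matrix (Fin N) (Fin N) ℝ) : Matrix (Fin N) (Fin N) ℝ :=
  1 - invSqrtDeg W * W * invSqrtDeg W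

/-- Random-walk transition matrix `D^{-1} W`. -/
def rwMat {N : ℕ} (W : Matrix (Fin N) (Fin N) ℝ) : Matrix (Fin N) (Fin N) ℝ :=
  Matrix.diagonal (fun i => (deg W i)⁻¹) * W

/-- The 0/1 partition matrix `P` of the partition encoded by `f` (node `i` lies in part `f i`). -/
def partMat {N n : ℕ} (f : Fin N → Fin n) : Matrix (Fin n) (Fin N) ℝ :=
  fun p i => if f i = p then 1 else 0

/-- Size `|S_p|` of the part `p`. -/
def partSize {N n : ℕ} (f : Fin N → Fin n) (p : Fin n) : ℕ :=
  (Finset.univ.filter fun i => f i = p).card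

/-- Coarse adjacency matrix `W_c = P W Pᵀ`. -/
def coarse {N n : ℕ} (f : Fin N → Fin n) (W : Matrix (Fin N) (Fin N) ℝ) :
    Matrix (Fin n) (Fin n) ℝ :=
  partMat f * W * (partMat f)ᵀ

/-- Lifted adjacency matrix `W_l(i,j) = W_c(f i, f j) / (|S_{f i}|·|S_{f j}|)`. -/
def liftG {N n : ℕ} (f : Fin N → Fin n) (W : Matrix (Fin N) (Fin N) ℝ) :
    Matrix (Fin N) (Fin N) ℝ :=
  fun i j => coarse f W (f i) (f j) / ((partSize f (f i) : ℝ) * (partSize f (f j) : ℝ))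

/-- Normalized coarsening matrix `C` with `C(p,i) = 1/√|S_p|` iff `i ∈ S_p`. -/
def coarsenMat {N n : ℕ} (f : Fin N → Fin n) : Matrix (Fin n) (Fin N) ℝ :=
  fun p i => if f i = p then (Real.sqrt (partSize f p : ℝ))⁻¹ else 0

/-- Pseudo-inverse `P⁺` of the partition matrix, `P⁺(i,p) = 1/|S_p|` iff `i ∈ S_p`. -/
def pinvMat {N n : ℕ} (f : Fin N → Fin n) : Matrix (Fin N) (Fin n) ℝ :=
  fun i p => if f i = p then ((partSize f p : ℝ))⁻¹ else 0

/-- `μ` lists the eigenvalues of `A` in nondecreasing order (with multiplicity):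
`μ` is monotone and the characteristic polynomial of `A` splits as `∏ (X - μ i)`. -/
def sortedEigs {m : ℕ} (A : Matrix (Fin m) (Fin m) ℝ) (μ : Fin m → ℝ) : Prop :=
  Monotone μ ∧ A.charpoly = ∏ i, (Polynomial.X - Polynomial.C (μ i))

/-- Squared Frobenius norm of a matrix. -/
def frobSq {a b : ℕ} (M : Matrix (Fin a) (Fin b) ℝ) : ℝ := ∑ i, ∑ j, (M i j) ^ 2

/-- Partial spectral distance between sorted spectra `μ` (original, size `N`) and
`μc` (coarse, size `n`): `∑_{i=1}^k |μ(i) - μc(i)| + ∑_{i=k+1}^n |μc(i) - μ(i+N-n)|`,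
where `k` is the largest index with `μc k < 1` (for monotone `μc`). -/
def SDpart {N n : ℕ} (h : n ≤ N) (μ : Fin N → ℝ) (μc : Fin n → ℝ) : ℝ :=
  ∑ i : Fin n,
    if μc i < 1 then |μ (Fin.castLE h i) - μc i|
    else |μc i - μ ⟨i.1 + N - n, by have := i.2; omega⟩|

section Aux

variable {N n : ℕ} (f : Fin N → Fin n) (W : Matrix (Fin N) (Fin N) ℝ)

lemma partSize_pos (hsurj : Function.Surjective f) (p : Fin n) :
    0 < partSize f p := by
  obtain ⟨i, hi⟩ := hsurj p
  exact Finset.card_pos.2 ⟨i, Finset.mem_filter.2 ⟨Finset.mem_univ i, hi⟩⟩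

lemma sum_fiber (G : Fin n → ℝ) :
    ∑ j : Fin N, G (f j) = ∑ q, (partSize f q : ℝ) * G q := by
  rw [← Finset.sum_fiberwise_of_maps_to' (t := Finset.univ) (fun i _ => Finset.mem_univ (f i)) G]
  refine Finset.sum_congr rfl fun q _ => ?_
  simp [Finset.sum_const, partSize, mul_comm]

lemma coarse_apply (p q : Fin n) :
    coarse f W p q = ∑ i, ∑ j, (if f i = p then 1 else 0) * W i j * (if f j = q then 1 else 0) := by
  simp only [coarse, Matrix.mul_apply, partMat, Matrix.transpose_apply]
  rw [Finset.sum_comm]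
  refine Finset.sum_congr rfl fun i _ => ?_
  rw [Finset.sum_mul]

lemma coarse_nonneg (hnonneg : ∀ i j, 0 ≤ W i j) (p q : Fin n) :
    0 ≤ coarse f W p q := by
  rw [coarse_apply]
  refine Finset.sum_nonneg fun i _ => Finset.sum_nonneg fun j _ => ?_
  have := hnonneg i j
  split_ifs <;> simp_all

lemma deg_coarse_nonneg (hnonneg : ∀ i j, 0 ≤ W i j) (p : Fin n) :
    0 ≤ deg (coarse f W) p :=
  Finset.sum_nonneg fun q _ => coarse_nonneg f W hnonneg p q

lemma deg_coarse_pos (hnonneg : ∀ i j, 0 ≤ W i j) (hdeg : ∀ i, 0 < deg W i)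
    (hsurj : Function.Surjective f) (p : Fin n) :
    0 < deg (coarse f W) p := by
  obtain ⟨i0, hi0⟩ := hsurj p
  have key : deg (coarse f W) p = ∑ i, (if f i = p then 1 else 0) * deg W i := by
    unfold deg
    simp only [coarse_apply]
    rw [Finset.sum_comm]
    refine Finset.sum_congr rfl fun i _ => ?_
    rw [Finset.sum_comm]
    simp only [mul_ite, mul_one, mul_zero, Finset.sum_ite_eq, Finset.mem_univ, if_true]
    rw [Finset.mul_sum]
  rw [key]
  apply Finset.sum_pos'
  · intro i _
    split_ifs <;> simp [le_of_lt (hdeg i)]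
  · exact ⟨i0, Finset.mem_univ _, by simp [hi0, hdeg i0]⟩

lemma deg_lift (hsurj : Function.Surjective f) (i : Fin N) :
    deg (liftG f W) i = deg (coarse f W) (f i) / (partSize f (f i) : ℝ) := by
  unfold deg liftG
  rw [sum_fiber f (fun q => coarse f W (f i) q / ((partSize f (f i) : ℝ) * (partSize f q : ℝ)))]
  rw [Finset.sum_div]
  refine Finset.sum_congr rfl fun q _ => ?_
  have hq : ((partSize f q : ℝ)) ≠ 0 := by
    exact_mod_cast (partSize_pos f hsurj q).ne'
  field_simp

lemma lift_vec (uc : Fin n → ℝ) (i : Fin N) :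
    (coarsenMat f)ᵀ.mulVec uc i = (Real.sqrt (partSize f (f i) : ℝ))⁻¹ * uc (f i) := by
  simp only [Matrix.mulVec, dotProduct, Matrix.transpose_apply, coarsenMat]
  rw [Finset.sum_eq_single (f i)]
  · simp
  · intro q _ hq; simp [Ne.symm hq]
  · simp

end Aux

lemma normLap_mulVec {m : ℕ} (A : Matrix (Fin m) (Fin m) ℝ) (u : Fin m → ℝ) (i : Fin m) :
    (normLap A).mulVec u i =
      u i - ∑ j, (Real.sqrt (deg A i))⁻¹ * A i j * (Real.sqrt (deg A j))⁻¹ * u j := by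
  rw [normLap, Matrix.sub_mulVec, Matrix.one_mulVec]
  simp only [Pi.sub_apply]
  congr 1
  rw [Matrix.mulVec, dotProduct]
  refine Finset.sum_congr rfl fun j _ => ?_
  rw [invSqrtDeg, Matrix.mul_diagonal, Matrix.diagonal_mul]

lemma alg_key (a b c d w u : ℝ) (ha : 0 < a) (hb : 0 < b) (hc : 0 < c) (hd : 0 < d) :
    (Real.sqrt (b / a))⁻¹ * (w / (a * c)) * (Real.sqrt (d / c))⁻¹ * ((Real.sqrt c)⁻¹ * u)
      = (Real.sqrt a)⁻¹ * ((Real.sqrt b)⁻¹ * w * (Real.sqrt d)⁻¹ * u) / c := by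
  obtain ⟨A, hA, rfl⟩ : ∃ A, 0 < A ∧ A * A = a :=
    ⟨Real.sqrt a, Real.sqrt_pos.2 ha, Real.mul_self_sqrt ha.le⟩
  obtain ⟨C, hC, rfl⟩ : ∃ C, 0 < C ∧ C * C = c :=
    ⟨Real.sqrt c, Real.sqrt_pos.2 hc, Real.mul_self_sqrt hc.le⟩
  have hb' : Real.sqrt b ≠ 0 := Real.sqrt_ne_zero'.2 hb
  have hd' : Real.sqrt d ≠ 0 := Real.sqrt_ne_zero'.2 hd
  rw [Real.sqrt_div hb.le, Real.sqrt_div hd.le, Real.sqrt_mul_self hA.le,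
    Real.sqrt_mul_self hC.le]
  field_simp

/-- **Eigenvector preservation.**
If `u_c` is an eigenvector of the coarse normalized Laplacian with eigenvalue `λ`,
then `Cᵀ u_c` is an eigenvector of the lifted normalized Laplacian with eigenvalue `λ`. -/
theorem eigenvector_lift {N n : ℕ} (W : Matrix (Fin N) (Fin N) ℝ)
    (hsymm : W.IsSymm) (hnonneg : ∀ i j, 0 ≤ W i j) (hdeg : ∀ i, 0 < deg W i)
    (f : Fin N → Fin n) (hsurj : Function.Surjective f)
    (lam : ℝ) (uc : Fin n → ℝ)
    (h : (normLap (coarse f W)).mulVec uc = lam • uc) :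
    (normLap (liftG f W)).mulVec ((coarsenMat f)ᵀ.mulVec uc) =
      lam • ((coarsenMat f)ᵀ.mulVec uc) := by
  have hs : ∀ p, (0:ℝ) < (partSize f p : ℝ) := fun p => by
    exact_mod_cast partSize_pos f hsurj p
  have hdc : ∀ p, 0 < deg (coarse f W) p := deg_coarse_pos f W hnonneg hdeg hsurj
  funext i
  rw [normLap_mulVec, lift_vec]
  have hcoarse := congrFun h (f i)
  rw [normLap_mulVec] at hcoarse
  simp only [Pi.smul_apply, smul_eq_mul] at hcoarse
  have hsum : ∑ j, (Real.sqrt (deg (liftG f W) i))⁻¹ * liftG f W i j *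
        (Real.sqrt (deg (liftG f W) j))⁻¹ * (coarsenMat f)ᵀ.mulVec uc j
      = (Real.sqrt ((partSize f (f i) : ℝ)))⁻¹ *
        ∑ q, (Real.sqrt (deg (coarse f W) (f i)))⁻¹ * coarse f W (f i) q *
          (Real.sqrt (deg (coarse f W) q))⁻¹ * uc q := by
    have step : ∀ j, (Real.sqrt (deg (liftG f W) i))⁻¹ * liftG f W i j *
          (Real.sqrt (deg (liftG f W) j))⁻¹ * (coarsenMat f)ᵀ.mulVec uc j
        = (fun q => (Real.sqrt ((partSize f (f i) : ℝ)))⁻¹ *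
            ((Real.sqrt (deg (coarse f W) (f i)))⁻¹ * coarse f W (f i) q *
              (Real.sqrt (deg (coarse f W) q))⁻¹ * uc q) / (partSize f q : ℝ)) (f j) := by
      intro j
      rw [lift_vec, deg_lift f W hsurj i, deg_lift f W hsurj j]
      show (Real.sqrt (deg (coarse f W) (f i) / (partSize f (f i) : ℝ)))⁻¹ *
          (coarse f W (f i) (f j) / ((partSize f (f i) : ℝ) * (partSize f (f j) : ℝ))) *
          (Real.sqrt (deg (coarse f W) (f j) / (partSize f (f j) : ℝ)))⁻¹ *
          ((Real.sqrt ((partSize f (f j) : ℝ)))⁻¹ * uc (f j)) = _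
      exact alg_key _ _ _ _ _ _ (hs (f i)) (hdc (f i)) (hs (f j)) (hdc (f j))
    rw [Finset.sum_congr rfl fun j _ => step j,
      sum_fiber f (fun q => (Real.sqrt ((partSize f (f i) : ℝ)))⁻¹ *
        ((Real.sqrt (deg (coarse f W) (f i)))⁻¹ * coarse f W (f i) q *
          (Real.sqrt (deg (coarse f W) q))⁻¹ * uc q) / (partSize f q : ℝ)),
      Finset.mul_sum]
    refine Finset.sum_congr rfl fun q _ => ?_
    rw [mul_comm ((partSize f q : ℝ)), div_mul_cancel₀ _ (hs q).ne']
  rw [hsum]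
  have hrhs : (lam • (coarsenMat f)ᵀ.mulVec uc) i
      = lam * ((Real.sqrt ((partSize f (f i) : ℝ)))⁻¹ * uc (f i)) := by
    rw [Pi.smul_apply, smul_eq_mul, lift_vec]
  rw [hrhs]
  linear_combination (Real.sqrt ((partSize f (f i) : ℝ)))⁻¹ * hcoarse
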